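/- Let w be a word of length n with periods p and q where p + q ≤ n + gcd(p,q). Then gcd(p,q) is a period of w (Fine–Wilf theorem, the two-period base case subsumed by the FW(P,n) construction: for P = {p,q} and n ≥ p + q - gcd(p,q), the relation ≈_{P,n} identifies all indices congruent mod gcd(p,q)). -/
import Mathlib


/-- minimum of a finite set of naturals (as `sInf`). -/
noncomputable def mP (P : Finset ℕ) : ℕ := sInf (↑P : Set ℕ)

/-- the generating relation `∼_{P,k}` on `{0,…,k-1}`. -/
def simRel (P : Finset ℕ) (k i j : ℕ) : Prop :=
  i < k ∧ j < k ∧ (i % mP P = j % mP P ∨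
    ∃ i' j', i' < k ∧ j' < k ∧ i' % mP P = i % mP P ∧ j' % mP P = j % mP P ∧
      (max i' j' - min i' j') ∈ P)

/-- the class of `i` under the equivalence closure `≈_{P,k}`. -/
def cls (P : Finset ℕ) (k i : ℕ) : Set ℕ := {j | Relation.EqvGen (simRel P k) i j}

/-- the FW-word: `FW P k i = min [i]_{P,k}`. -/
noncomputable def FW (P : Finset ℕ) (k : ℕ) : ℕ → ℕ := fun i => sInf (cls P k i)

/-- Euclidean reduction `Q = {p - m : p ∈ P, p ≠ m} ∪ {m}`. -/
noncomputable def Qred (P : Finset ℕ) : Finset ℕ :=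
  ((P.erase (mP P)).image (fun p => p - mP P)) ∪ {mP P}

/-- `p` is a period of the word `w` of length `n`. -/
def HasPeriodF {A : Type*} (w : ℕ → A) (n p : ℕ) : Prop :=
  ∀ i, i + p < n → w i = w (i + p)

lemma fw_step {A : Type*} (w : ℕ → A) (m g : ℕ) (hg : HasPeriodF w m g) :
    ∀ k i, i + k * g < m → w i = w (i + k * g) := by
  intro k
  induction k with
  | zero => simp
  | succ k ih =>
    intro i hlt
    have hkg : (k + 1) * g = k * g + g := by ring
    have h1 : w i = w (i + g) := hg i (by omega)
    have h2 : w (i + g) = w (i + g + k * g) := ih (i + g) (by omega)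
    have : i + g + k * g = i + (k + 1) * g := by ring
    rw [h1, h2, this]

lemma fw_aux {A : Type*} : ∀ N p q n (w : ℕ → A), p + q ≤ N → 0 < p → 0 < q →
    p ≤ q → HasPeriodF w n p → HasPeriodF w n q → p + q ≤ n + Nat.gcd p q →
    HasPeriodF w n (Nat.gcd p q) := by
  intro N
  induction N with
  | zero => intro p q n w hN hp hq _ _ _ _; omega
  | succ N ih =>
    intro p q n w hN hp hq hle hwp hwq h
    by_cases hd : p ∣ q
    · rw [Nat.gcd_eq_left hd]; exact hwp
    have hplt : p < q := lt_of_le_of_ne hle (fun he => hd (he ▸ dvd_refl p))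
    set g := Nat.gcd p q with hgdef
    have hgp : g ∣ p := Nat.gcd_dvd_left p q
    have hgq : g ∣ q := Nat.gcd_dvd_right p q
    have hg0 : 0 < g := Nat.gcd_pos_of_pos_left q hp
    have hglep : g ≤ p := Nat.le_of_dvd hp hgp
    have hgqp : g ∣ q - p := Nat.dvd_sub hgq hgp
    have hqpg : g ≤ q - p := Nat.le_of_dvd (by omega) hgqp
    have hn2p : 2 * p ≤ n := by omega
    have hm : p ≤ n - p := by omega
    -- period q - p on length n - p
    have hq' : HasPeriodF w (n - p) (q - p) := by
      intro i hi
      have h1 : w i = w (i + q) := hwq i (by omega)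
      have h2 : w (i + (q - p)) = w (i + (q - p) + p) := hwp (i + (q - p)) (by omega)
      have h3 : i + (q - p) + p = i + q := by omega
      rw [h1, h2, h3]
    have hp' : HasPeriodF w (n - p) p := fun i hi => hwp i (by omega)
    -- inductive step: period g on length n - p
    have hgcd' : Nat.gcd p (q - p) = g := by
      rw [hgdef, Nat.gcd_comm p q, ← Nat.gcd_sub_self_left hle, Nat.gcd_comm]
    have hg : HasPeriodF w (n - p) g := by
      rcases le_or_gt p (q - p) with hc | hc
      · have := ih p (q - p) (n - p) w (by omega) hp (by omega) hc hp' hq'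
          (by rw [hgcd']; omega)
        rwa [hgcd'] at this
      · have := ih (q - p) p (n - p) w (by omega) (by omega) hp (le_of_lt hc) hq' hp'
          (by rw [Nat.gcd_comm, hgcd']; omega)
        rwa [Nat.gcd_comm, hgcd'] at this
    -- patch to length n
    intro i hi
    by_cases hcase : i + g < n - p
    · exact hg i hcase
    · by_cases hip : p ≤ i
      · have h1 : w (i - p) = w (i - p + p) := hwp (i - p) (by omega)
        have h2 : w (i - p) = w (i - p + g) := hg (i - p) (by omega)
        have h3 : w (i - p + g) = w (i - p + g + p) := hwp (i - p + g) (by omega)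
        have e1 : i - p + p = i := by omega
        have e2 : i - p + g + p = i + g := by omega
        rw [e1] at h1
        rw [e2] at h3
        rw [← h1, h2, h3]
      · -- i < p, i + g ≥ n - p; let j = i + g - p
        have hj0 : p ≤ i + g := by omega
        set j := i + g - p with hjdef
        have h1 : w j = w (j + p) := hwp j (by omega)
        have e1 : j + p = i + g := by omega
        obtain ⟨c, hc⟩ := hgp
        have h5 : c * g = p := by rw [hc]; ring
        have h6 : (c - 1) * g + g = c * g := by
          cases c with
          | zero => omega
          | succ c' => simp only [Nat.succ_sub_one]; ring
        have e2 : j + (c - 1) * g = i := by omega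
        have h2 : w j = w (j + (c - 1) * g) := fw_step w (n - p) g hg (c - 1) j (by omega)
        rw [e2] at h2
        rw [← h2, h1, e1]

theorem stmt17 {A : Type*} (w : ℕ → A) (n p q : ℕ) (hp : 0 < p) (hq : 0 < q)
    (hwp : HasPeriodF w n p) (hwq : HasPeriodF w n q)
    (h : p + q ≤ n + Nat.gcd p q) :
    HasPeriodF w n (Nat.gcd p q) := by
  rcases le_or_gt p q with hle | hlt
  · exact fw_aux (p + q) p q n w le_rfl hp hq hle hwp hwq h
  · rw [Nat.gcd_comm]
    exact fw_aux (q + p) q p n w le_rfl hq hp (le_of_lt hlt) hwq hwp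
      (by rw [Nat.gcd_comm]; omega)
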